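/- Let m ≥ 1 and let A, B, C, C' be m×m matrices over F₂ such that the digital nets generated by (A, B, C) and by (A, B, C') are both (0,m,3)-nets over F₂. Let c_j and c'_j denote the j-th rows of C and C' respectively. Then for every 1 ≤ j ≤ m, the F₂-subspaces span{c_1,…,c_j} and span{c'_1,…,c'_j} of F₂^m are equal. -/

import Mathlib

open Matrix

/-- The vector of binary digits of `l` (least significant first). -/
def digitsVec (m l : ℕ) : Fin m → ZMod 2 := fun k => if l.testBit k.val then 1 else 0

/-- The map φ sending a bit vector to a real number in [0,1). -/
noncomputable def phiMap (m : ℕ) (y : Fin m → ZMod 2) : ℝ :=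
  ∑ k : Fin m, ((y k).val : ℝ) / 2 ^ (k.val + 1)

/-- The digital net (as a multiset of `2^m` points in `[0,1)^s`) generated by
matrices `C 0, …, C (s-1)`. -/
noncomputable def digitalNet (m s : ℕ) (C : Fin s → Matrix (Fin m) (Fin m) (ZMod 2)) :
    Multiset (Fin s → ℝ) :=
  (Multiset.range (2 ^ m)).map fun l => fun j => phiMap m ((C j).mulVec (digitsVec m l))

open Classical in
/-- `P` is a `(t,m,s)`-net over `F₂`: every elementary interval of volume `2^{t-m}`
contains exactly `2^t` points of `P`, counted with multiplicity. -/
def IsNet (t m s : ℕ) (P : Multiset (Fin s → ℝ)) : Prop :=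
  ∀ d : Fin s → ℕ, (∑ i, d i) = m - t →
    ∀ a : Fin s → ℕ, (∀ i, a i < 2 ^ d i) →
      (P.countP fun x => ∀ i,
        ((a i : ℝ) / 2 ^ d i ≤ x i ∧ x i < ((a i : ℝ) + 1) / 2 ^ d i)) = 2 ^ t

/-- The anti-diagonal matrix `J_m` over `F₂`. -/
def Jmat (m : ℕ) : Matrix (Fin m) (Fin m) (ZMod 2) :=
  Matrix.of fun i j => if i.val + j.val = m - 1 then 1 else 0

/-- The upper-triangular Pascal matrix `P_m` over `F₂` (0-indexed entry `(i,j)` is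
`binom(j,i) mod 2`). -/
def Pmat (m : ℕ) : Matrix (Fin m) (Fin m) (ZMod 2) :=
  Matrix.of fun i j => ((j.val.choose i.val : ℕ) : ZMod 2)

/-- A matrix is lower triangular. -/
def IsLowerTri {m : ℕ} (L : Matrix (Fin m) (Fin m) (ZMod 2)) : Prop :=
  ∀ i j : Fin m, i < j → L i j = 0

/-- The set consisting of the first `n` rows of `M`. -/
def rowSet {m : ℕ} (M : Matrix (Fin m) (Fin m) (ZMod 2)) (n : ℕ) :
    Set (Fin m → ZMod 2) :=
  {x | ∃ r : Fin m, r.val < n ∧ x = M r}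

/-- The subspace `V_{i,j}` spanned by the first `i` rows of `A`, the first
`m−i−j−1` rows of `B` and the first `j` rows of `C`. -/
def Vsub {m : ℕ} (A B C : Matrix (Fin m) (Fin m) (ZMod 2)) (i j : ℕ) :
    Submodule (ZMod 2) (Fin m → ZMod 2) :=
  Submodule.span (ZMod 2) (rowSet A i ∪ rowSet B (m - i - j - 1) ∪ rowSet C j)


-- extended digit function
def Yd (m : ℕ) (y : Fin m → ZMod 2) (j : ℕ) : ℕ := if h : j < m then (y ⟨j, h⟩).val else 0

def Nval (m d : ℕ) (y : Fin m → ZMod 2) : ℕ := ∑ j ∈ Finset.range d, Yd m y j * 2 ^ (d - 1 - j)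

lemma Yd_le_one (m : ℕ) (y : Fin m → ZMod 2) (j : ℕ) : Yd m y j ≤ 1 := by
  unfold Yd; split
  · exact Nat.lt_succ_iff.mp (ZMod.val_lt _)
  · omega

lemma sum_range_two_pow (n : ℕ) : ∑ j ∈ Finset.range n, 2 ^ j = 2 ^ n - 1 := by
  induction n with
  | zero => simp
  | succ n ih => rw [Finset.sum_range_succ, ih]; have := Nat.one_le_two_pow (n := n); ring_nf; omega

lemma Nval_lt (m d : ℕ) (y : Fin m → ZMod 2) : Nval m d y < 2 ^ d := by
  have h1 : Nval m d y ≤ ∑ j ∈ Finset.range d, 2 ^ (d - 1 - j) := by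
    apply Finset.sum_le_sum
    intro j hj
    calc Yd m y j * 2 ^ (d-1-j) ≤ 1 * 2 ^ (d-1-j) :=
      Nat.mul_le_mul_right _ (Yd_le_one m y j)
    _ = 2 ^ (d-1-j) := one_mul _
  rw [Finset.sum_range_reflect (fun j => 2 ^ j) d] at h1
  rw [sum_range_two_pow] at h1
  have := Nat.one_le_two_pow (n := d)
  omega

lemma Nval_split (m d : ℕ) (hd : d ≤ m) (y : Fin m → ZMod 2) :
    ∃ R < 2 ^ (m - d), Nval m m y = 2 ^ (m - d) * Nval m d y + R := by
  refine ⟨∑ j ∈ Finset.Ico d m, Yd m y j * 2 ^ (m - 1 - j), ?_, ?_⟩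
  · have h1 : ∑ j ∈ Finset.Ico d m, Yd m y j * 2 ^ (m-1-j) ≤ ∑ j ∈ Finset.Ico d m, 2 ^ (m-1-j) := by
      apply Finset.sum_le_sum
      intro j hj
      calc Yd m y j * 2 ^ (m-1-j) ≤ 1 * 2 ^ (m-1-j) := Nat.mul_le_mul_right _ (Yd_le_one m y j)
      _ = _ := one_mul _
    rw [Finset.sum_Ico_eq_sum_range, Finset.sum_Ico_eq_sum_range] at h1
    have h2 : ∑ k ∈ Finset.range (m - d), 2 ^ (m - 1 - (d + k)) = ∑ k ∈ Finset.range (m-d), 2 ^ (m - d - 1 - k) := by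
      apply Finset.sum_congr rfl
      intro k hk
      simp only [Finset.mem_range] at hk
      congr 1
      omega
    rw [h2, Finset.sum_range_reflect (fun j => 2 ^ j) (m-d), sum_range_two_pow] at h1
    have := Nat.one_le_two_pow (n := m - d)
    rw [Finset.sum_Ico_eq_sum_range]
    omega
  · unfold Nval
    rw [← Finset.sum_range_add_sum_Ico _ hd]
    congr 1
    rw [Finset.mul_sum]
    apply Finset.sum_congr rfl
    intro j hj
    simp only [Finset.mem_range] at hj
    have : 2 ^ (m - 1 - j) = 2 ^ (m - d) * 2 ^ (d - 1 - j) := by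
      rw [← pow_add]; congr 1; omega
    rw [this]; ring

lemma phi_eq (m : ℕ) (y : Fin m → ZMod 2) : phiMap m y = (Nval m m y : ℝ) / 2 ^ m := by
  unfold phiMap Nval
  rw [Nat.cast_sum, Finset.sum_div]
  rw [← Fin.sum_univ_eq_sum_range (fun j => ((Yd m y j * 2 ^ (m - 1 - j) : ℕ) : ℝ) / 2 ^ m) m]
  apply Finset.sum_congr rfl
  intro k _
  have hY : Yd m y k.val = (y k).val := by unfold Yd; rw [dif_pos k.isLt]
  rw [hY]
  push_cast
  rw [div_eq_div_iff (by positivity) (by positivity)]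
  rw [mul_assoc, ← pow_add]
  congr 2
  omega

lemma interval_iff (m d : ℕ) (hd : d ≤ m) (a : ℕ) (ha : a < 2 ^ d) (y : Fin m → ZMod 2) :
    ((a : ℝ) / 2 ^ d ≤ phiMap m y ∧ phiMap m y < ((a : ℝ) + 1) / 2 ^ d) ↔ Nval m d y = a := by
  obtain ⟨R, hR, hsplit⟩ := Nval_split m d hd y
  rw [phi_eq]
  have h2d : (0:ℝ) < 2 ^ d := by positivity
  have h2m : (0:ℝ) < 2 ^ m := by positivity
  rw [div_le_div_iff₀ h2d h2m, div_lt_div_iff₀ h2m h2d]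
  have hcast1 : ((a : ℝ) * 2 ^ m ≤ (Nval m m y : ℝ) * 2 ^ d) ↔ a * 2 ^ m ≤ Nval m m y * 2 ^ d := by
    exact_mod_cast Iff.rfl
  have hcast2 : ((Nval m m y : ℝ) * 2 ^ d < ((a : ℝ) + 1) * 2 ^ m) ↔ Nval m m y * 2 ^ d < (a + 1) * 2 ^ m := by
    exact_mod_cast Iff.rfl
  rw [hcast1, hcast2, hsplit]
  set E := 2 ^ (m - d) with hE
  set Nd := Nval m d y with hNd
  have hpow : 2 ^ m = E * 2 ^ d := by rw [hE, ← pow_add]; congr 1; omega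
  have h2dpos : 0 < 2 ^ d := Nat.pow_pos (by norm_num)
  have hEpos : 0 < E := Nat.pow_pos (by norm_num)
  constructor
  · rintro ⟨h1, h2⟩
    rw [hpow] at h1 h2
    have h1' : a * E ≤ E * Nd + R := by
      have hh : a * E * 2 ^ d ≤ (E * Nd + R) * 2 ^ d := by
        calc a * E * 2 ^ d = a * (E * 2 ^ d) := by ring
        _ ≤ (E * Nd + R) * 2 ^ d := h1
      exact le_of_mul_le_mul_right hh h2dpos
    have h2' : E * Nd + R < (a + 1) * E := by
      have hh : (E * Nd + R) * 2 ^ d < (a + 1) * E * 2 ^ d := by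
        calc (E * Nd + R) * 2 ^ d < (a + 1) * (E * 2 ^ d) := h2
        _ = (a + 1) * E * 2 ^ d := by ring
      exact lt_of_mul_lt_mul_right hh (Nat.zero_le _)
    have hu' : Nd < a + 1 := by
      have hh : Nd * E < (a + 1) * E := by
        calc Nd * E = E * Nd := by ring
        _ < (a + 1) * E := by omega
      exact lt_of_mul_lt_mul_right hh (Nat.zero_le _)
    have hl' : a < Nd + 1 := by
      have hh : a * E < (Nd + 1) * E := by
        calc a * E ≤ E * Nd + R := h1'
        _ < E * Nd + E := by omega
        _ = (Nd + 1) * E := by ring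
      exact lt_of_mul_lt_mul_right hh (Nat.zero_le _)
    omega
  · intro hEq
    rw [hEq, hpow]
    constructor
    · calc a * (E * 2 ^ d) = (E * a) * 2 ^ d := by ring
      _ ≤ (E * a + R) * 2 ^ d := Nat.mul_le_mul_right _ (by omega)
    · calc (E * a + R) * 2 ^ d < (E * a + E) * 2 ^ d :=
          mul_lt_mul_of_pos_right (by omega) h2dpos
      _ = (a + 1) * (E * 2 ^ d) := by ring

lemma digitsVec_injOn (m : ℕ) : ∀ l1 ∈ Finset.range (2 ^ m), ∀ l2 ∈ Finset.range (2 ^ m),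
    digitsVec m l1 = digitsVec m l2 → l1 = l2 := by
  intro l1 h1 l2 h2 heq
  simp only [Finset.mem_range] at h1 h2
  apply Nat.eq_of_testBit_eq
  intro i
  by_cases hi : i < m
  · have := congrFun heq ⟨i, hi⟩
    simp only [digitsVec] at this
    by_cases b1 : l1.testBit i <;> by_cases b2 : l2.testBit i <;>
      simp [b1, b2] at this ⊢
  · have e1 : l1.testBit i = false := Nat.testBit_eq_false_of_lt (lt_of_lt_of_le h1 (Nat.pow_le_pow_right (by norm_num) (by omega)))
    have e2 : l2.testBit i = false := Nat.testBit_eq_false_of_lt (lt_of_lt_of_le h2 (Nat.pow_le_pow_right (by norm_num) (by omega)))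
    rw [e1, e2]

lemma digitsVec_surj (m : ℕ) (v : Fin m → ZMod 2) : ∃ l ∈ Finset.range (2 ^ m), digitsVec m l = v := by
  classical
  have hcard : (Finset.range (2 ^ m)).card = Fintype.card (Fin m → ZMod 2) := by
    simp [Fintype.card_fun]
  have := Finset.surj_on_of_inj_on_of_card_le (s := Finset.range (2 ^ m)) (t := Finset.univ)
    (f := fun l _ => digitsVec m l) (fun l _ => Finset.mem_univ _)
    (fun a₁ a₂ h₁ h₂ h => digitsVec_injOn m a₁ h₁ a₂ h₂ h)
    (by simp [hcard])
  obtain ⟨l, hl, hv⟩ := this v (Finset.mem_univ v)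
  exact ⟨l, hl, hv.symm⟩

lemma Nval_eq_zero (m d : ℕ) (hd : d ≤ m) (y : Fin m → ZMod 2)
    (hy : ∀ k : Fin m, k.val < d → y k = 0) : Nval m d y = 0 := by
  apply Finset.sum_eq_zero
  intro j hj
  simp only [Finset.mem_range] at hj
  have hjm : j < m := lt_of_lt_of_le hj hd
  unfold Yd
  rw [dif_pos hjm, hy ⟨j, hjm⟩ hj]
  simp

lemma net_inj (m : ℕ) (M : Fin 3 → Matrix (Fin m) (Fin m) (ZMod 2))
    (h : IsNet 0 m 3 (digitalNet m 3 M)) (d : Fin 3 → ℕ) (hd : d 0 + d 1 + d 2 = m) :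
    ∀ v : Fin m → ZMod 2, (∀ (i : Fin 3) (k : Fin m), k.val < d i → ((M i).mulVec v) k = 0) →
      v = 0 := by
  classical
  intro v hv
  by_contra hvne
  have hdle : ∀ i : Fin 3, d i ≤ m := by
    intro i
    fin_cases i
    · exact (by omega : d 0 ≤ m)
    · exact (by omega : d 1 ≤ m)
    · exact (by omega : d 2 ≤ m)
  have hcount := h d (by rw [Fin.sum_univ_three]; omega) (fun _ => 0) (fun i => by positivity)
  -- the predicate
  obtain ⟨l₀, hl₀, hdig₀⟩ := digitsVec_surj m 0
  obtain ⟨l₁, hl₁, hdig₁⟩ := digitsVec_surj m v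
  have hne : l₀ ≠ l₁ := by
    intro hcon
    apply hvne
    rw [← hdig₁, ← hcon, hdig₀]
  have hpred : ∀ l ∈ Finset.range (2 ^ m), l = l₀ ∨ l = l₁ →
      (∀ i : Fin 3, ((0 : ℕ) : ℝ) / 2 ^ d i ≤ phiMap m ((M i).mulVec (digitsVec m l)) ∧
        phiMap m ((M i).mulVec (digitsVec m l)) < (((0 : ℕ) : ℝ) + 1) / 2 ^ d i) := by
    intro l _ hl i
    rw [interval_iff m (d i) (hdle i) 0 (by positivity)]
    apply Nval_eq_zero m (d i) (hdle i)
    intro k hk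
    rcases hl with rfl | rfl
    · rw [hdig₀]
      simp [Matrix.mulVec_zero]
    · rw [hdig₁]
      exact hv i k hk
  -- count is at least 2
  unfold digitalNet at hcount
  rw [Multiset.countP_map] at hcount
  have hsub : ({l₀, l₁} : Finset ℕ).val ≤ Multiset.filter
      (fun l => ∀ i : Fin 3, ((0:ℕ):ℝ) / 2 ^ d i ≤ phiMap m ((M i).mulVec (digitsVec m l)) ∧
        phiMap m ((M i).mulVec (digitsVec m l)) < (((0:ℕ):ℝ) + 1) / 2 ^ d i)
      (Multiset.range (2 ^ m)) := by
    rw [Multiset.le_iff_subset (Finset.nodup _)]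
    intro l hl
    have hl' : l = l₀ ∨ l = l₁ := by
      simpa using hl
    have hmem : l ∈ Finset.range (2 ^ m) := by
      rcases hl' with rfl | rfl <;> assumption
    rw [Multiset.mem_filter]
    constructor
    · rw [← Finset.range_val]; exact hmem
    · exact hpred l hmem hl'
  have h2 : 2 ≤ Multiset.card (Multiset.filter
      (fun l => ∀ i : Fin 3, ((0:ℕ):ℝ) / 2 ^ d i ≤ phiMap m ((M i).mulVec (digitsVec m l)) ∧
        phiMap m ((M i).mulVec (digitsVec m l)) < (((0:ℕ):ℝ) + 1) / 2 ^ d i)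
      (Multiset.range (2 ^ m))) := by
    have := Multiset.card_le_card hsub
    rwa [show Multiset.card ({l₀, l₁} : Finset ℕ).val = 2 from Finset.card_pair hne] at this
  rw [hcount] at h2
  norm_num at h2


def fam {m : ℕ} (A B C : Matrix (Fin m) (Fin m) (ZMod 2)) (p q : ℕ) :
    Fin m → (Fin m → ZMod 2) := fun i =>
  if i.val < p then A i
  else if i.val < p + q then B ⟨i.val - p, by omega⟩
  else C ⟨i.val - p - q, by omega⟩

section Fam
variable {m : ℕ} (A B C : Matrix (Fin m) (Fin m) (ZMod 2))

/-- abbreviation for the injectivity condition extracted from the net property -/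
def NetInj {m : ℕ} (A B C : Matrix (Fin m) (Fin m) (ZMod 2)) : Prop :=
  ∀ p q r : ℕ, p + q + r = m →
    ∀ v : Fin m → ZMod 2,
      ((∀ k : Fin m, k.val < p → A.mulVec v k = 0) ∧
       (∀ k : Fin m, k.val < q → B.mulVec v k = 0) ∧
       (∀ k : Fin m, k.val < r → C.mulVec v k = 0)) → v = 0

lemma fam_dot (hN : NetInj A B C) {p q r : ℕ} (hpqr : p + q + r = m)
    (v : Fin m → ZMod 2) (hv : ∀ i : Fin m, fam A B C p q i ⬝ᵥ v = 0) : v = 0 := by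
  apply hN p q r hpqr v
  refine ⟨?_, ?_, ?_⟩
  · intro k hk
    have := hv k
    rw [fam, if_pos hk] at this
    exact this
  · intro k hk
    have hlt : p + k.val < m := by omega
    have := hv ⟨p + k.val, hlt⟩
    rw [fam] at this
    rw [if_neg (show ¬(p + k.val < p) by omega),
      if_pos (show p + k.val < p + q by omega)] at this
    have hfin : (⟨(⟨p + k.val, hlt⟩ : Fin m).val - p, by omega⟩ : Fin m) = k := by
      apply Fin.ext; simp
    rw [hfin] at this
    exact this
  · intro k hk
    have hlt : p + q + k.val < m := by omega
    have := hv ⟨p + q + k.val, hlt⟩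
    rw [fam] at this
    rw [if_neg (show ¬(p + q + k.val < p) by omega),
      if_neg (show ¬(p + q + k.val < p + q) by omega)] at this
    have hfin : (⟨(⟨p + q + k.val, hlt⟩ : Fin m).val - p - q, by omega⟩ : Fin m) = k := by
      apply Fin.ext; simp; omega
    rw [hfin] at this
    exact this

lemma fam_li (hN : NetInj A B C) {p q r : ℕ} (hpqr : p + q + r = m) :
    LinearIndependent (ZMod 2) (fam A B C p q) := by
  classical
  set G : Matrix (Fin m) (Fin m) (ZMod 2) := Matrix.of (fam A B C p q) with hG
  have hinj : Function.Injective G.mulVecLin := by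
    rw [← LinearMap.ker_eq_bot]
    rw [Submodule.eq_bot_iff]
    intro v hv
    rw [LinearMap.mem_ker] at hv
    apply fam_dot A B C hN hpqr
    intro i
    have := congrFun hv i
    exact this
  have hsurj : Function.Surjective G.mulVecLin :=
    LinearMap.injective_iff_surjective.mp hinj
  rw [Fintype.linearIndependent_iff]
  intro c hc i₀
  obtain ⟨v, hvv⟩ := hsurj (Pi.single i₀ 1)
  have hdot : (∑ i : Fin m, c i • fam A B C p q i) ⬝ᵥ v = 0 := by
    rw [hc]; simp [dotProduct]
  have hswap : (∑ i : Fin m, c i • fam A B C p q i) ⬝ᵥ v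
      = ∑ i : Fin m, c i * (fam A B C p q i ⬝ᵥ v) := by
    simp only [dotProduct, Finset.sum_apply, Finset.sum_mul, Pi.smul_apply,
      smul_eq_mul]
    rw [Finset.sum_comm]
    apply Finset.sum_congr rfl
    intro i _
    rw [Finset.mul_sum]
    apply Finset.sum_congr rfl
    intro j _
    ring
  have hval : ∀ i : Fin m, fam A B C p q i ⬝ᵥ v = (Pi.single i₀ 1 : Fin m → ZMod 2) i := by
    intro i
    exact congrFun hvv i
  rw [hswap] at hdot
  simp only [hval] at hdot
  rw [Finset.sum_eq_single i₀] at hdot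
  · simpa using hdot
  · intro j _ hj
    rw [Pi.single_eq_of_ne hj]
    ring
  · intro hi; exact absurd (Finset.mem_univ i₀) hi

noncomputable def famBasis (hm : 0 < m) (hN : NetInj A B C) {p q r : ℕ}
    (hpqr : p + q + r = m) : Module.Basis (Fin m) (ZMod 2) (Fin m → ZMod 2) :=
  haveI : Nonempty (Fin m) := ⟨⟨0, hm⟩⟩
  basisOfLinearIndependentOfCardEqFinrank (fam_li A B C hN hpqr)
    (by simp [Module.finrank_pi])

lemma famBasis_coe (hm : 0 < m) (hN : NetInj A B C) {p q r : ℕ} (hpqr : p + q + r = m) :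
    ⇑(famBasis A B C hm hN hpqr) = fam A B C p q := by
  haveI : Nonempty (Fin m) := ⟨⟨0, hm⟩⟩
  unfold famBasis
  exact coe_basisOfLinearIndependentOfCardEqFinrank _ _

end Fam

lemma rowSet_eq_image {m : ℕ} (A B C : Matrix (Fin m) (Fin m) (ZMod 2))
    (p q p₁ q₁ r₁ : ℕ) (hpq : p + q ≤ m) (hp₁ : p₁ ≤ p) (hq₁ : q₁ ≤ q)
    (hr₁ : r₁ ≤ m - p - q) :
    rowSet A p₁ ∪ rowSet B q₁ ∪ rowSet C r₁ =
      fam A B C p q '' {i : Fin m | i.val < p₁ ∨ (p ≤ i.val ∧ i.val < p + q₁) ∨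
        (p + q ≤ i.val ∧ i.val < p + q + r₁)} := by
  ext x
  simp only [Set.mem_union, Set.mem_image, Set.mem_setOf_eq, rowSet]
  constructor
  · rintro ((⟨ρ, hρ, rfl⟩ | ⟨ρ, hρ, rfl⟩) | ⟨ρ, hρ, rfl⟩)
    · exact ⟨ρ, Or.inl (by omega), by rw [fam, if_pos (show ρ.val < p by omega)]⟩
    · refine ⟨⟨p + ρ.val, by omega⟩, Or.inr (Or.inl ⟨show p ≤ p + ρ.val by omega,
        show p + ρ.val < p + q₁ by omega⟩), ?_⟩
      rw [fam, if_neg (show ¬(p + ρ.val < p) by omega),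
        if_pos (show p + ρ.val < p + q by omega)]
      exact congrArg B (Fin.ext (by simp))
    · refine ⟨⟨p + q + ρ.val, by omega⟩, Or.inr (Or.inr ⟨show p + q ≤ p + q + ρ.val by omega,
        show p + q + ρ.val < p + q + r₁ by omega⟩), ?_⟩
      rw [fam, if_neg (show ¬(p + q + ρ.val < p) by omega),
        if_neg (show ¬(p + q + ρ.val < p + q) by omega)]
      exact congrArg C (Fin.ext (by simp; omega))
  · rintro ⟨i, (h | ⟨h1, h2⟩ | ⟨h1, h2⟩), rfl⟩
    · exact Or.inl (Or.inl ⟨i, h, by rw [fam, if_pos (show i.val < p by omega)]⟩)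
    · refine Or.inl (Or.inr ⟨⟨i.val - p, by omega⟩, show i.val - p < q₁ by omega, ?_⟩)
      rw [fam, if_neg (show ¬(i.val < p) by omega), if_pos (show i.val < p + q by omega)]
    · refine Or.inr ⟨⟨i.val - p - q, by omega⟩, show i.val - p - q < r₁ by omega, ?_⟩
      rw [fam, if_neg (show ¬(i.val < p) by omega), if_neg (show ¬(i.val < p + q) by omega)]

-- generic basis lemmas over ZMod 2
lemma basis_span_inter {m : ℕ} (b : Module.Basis (Fin m) (ZMod 2) (Fin m → ZMod 2))
    {S₁ S₂ : Set (Fin m)} {x : Fin m → ZMod 2}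
    (h1 : x ∈ Submodule.span (ZMod 2) (⇑b '' S₁))
    (h2 : x ∈ Submodule.span (ZMod 2) (⇑b '' S₂)) :
    x ∈ Submodule.span (ZMod 2) (⇑b '' (S₁ ∩ S₂)) := by
  rw [Module.Basis.mem_span_image] at h1 h2 ⊢
  exact Set.subset_inter h1 h2

lemma basis_not_mem {m : ℕ} (b : Module.Basis (Fin m) (ZMod 2) (Fin m → ZMod 2))
    {S : Set (Fin m)} {i₀ : Fin m} (hS : i₀ ∉ S) :
    b i₀ ∉ Submodule.span (ZMod 2) (⇑b '' S) := by
  rw [Module.Basis.mem_span_image]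
  intro hsub
  apply hS
  apply hsub
  rw [Module.Basis.repr_self]
  simp

lemma basis_char2 {m : ℕ} (b : Module.Basis (Fin m) (ZMod 2) (Fin m → ZMod 2))
    {i₀ : Fin m} {x' : Fin m → ZMod 2}
    (hx' : x' ∉ Submodule.span (ZMod 2) (⇑b '' (Set.univ \ {i₀}))) :
    b i₀ + x' ∈ Submodule.span (ZMod 2) (⇑b '' (Set.univ \ {i₀})) := by
  have hz : ∀ z : ZMod 2, z = 0 ∨ z = 1 := by decide
  rw [Module.Basis.mem_span_image] at hx' ⊢
  have hne : (b.repr x') i₀ ≠ 0 := by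
    intro h0
    apply hx'
    intro j hj
    rw [Finset.mem_coe, Finsupp.mem_support_iff] at hj
    refine ⟨Set.mem_univ j, ?_⟩
    intro hji
    rw [Set.mem_singleton_iff] at hji
    subst hji
    exact hj h0
  have h1 : (b.repr x') i₀ = 1 := (hz _).resolve_left hne
  intro j hj
  rw [Finset.mem_coe, Finsupp.mem_support_iff] at hj
  refine ⟨Set.mem_univ j, ?_⟩
  intro hji
  rw [Set.mem_singleton_iff] at hji
  subst hji
  apply hj
  rw [map_add, Finsupp.add_apply, Module.Basis.repr_self, Finsupp.single_eq_same, h1]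
  decide

lemma rowSet_zero {m : ℕ} (M : Matrix (Fin m) (Fin m) (ZMod 2)) : rowSet M 0 = ∅ := by
  ext x; simp [rowSet]

lemma rowSet_mono {m : ℕ} (M : Matrix (Fin m) (Fin m) (ZMod 2)) {a b : ℕ} (h : a ≤ b) :
    rowSet M a ⊆ rowSet M b := by
  rintro x ⟨r, hr, rfl⟩
  exact ⟨r, by omega, rfl⟩

lemma rowSet_succ {m : ℕ} (M : Matrix (Fin m) (Fin m) (ZMod 2)) {s : ℕ} (hs : s < m) :
    rowSet M (s + 1) = rowSet M s ∪ {M ⟨s, hs⟩} := by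
  ext x
  constructor
  · rintro ⟨r, hr, rfl⟩
    by_cases h : r.val < s
    · exact Or.inl ⟨r, h, rfl⟩
    · have : r = ⟨s, hs⟩ := Fin.ext (show r.val = s by omega)
      subst this
      exact Or.inr rfl
  · rintro (⟨r, hr, rfl⟩ | h)
    · exact ⟨r, by omega, rfl⟩
    · rw [Set.mem_singleton_iff] at h
      exact ⟨⟨s, hs⟩, show s < s + 1 by omega, h⟩

lemma step {m : ℕ} (A B C C' : Matrix (Fin m) (Fin m) (ZMod 2))
    (hN : NetInj A B C) (hN' : NetInj A B C') (s : ℕ) (hs : s + 1 ≤ m)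
    (IH : Submodule.span (ZMod 2) (rowSet C s) = Submodule.span (ZMod 2) (rowSet C' s)) :
    Submodule.span (ZMod 2) (rowSet C' (s + 1)) ≤ Submodule.span (ZMod 2) (rowSet C (s + 1)) := by
  have hm : 0 < m := by omega
  set t := m - (s + 1) with ht
  set x : Fin m → ZMod 2 := C ⟨s, by omega⟩ with hx
  set x' : Fin m → ZMod 2 := C' ⟨s, by omega⟩ with hx'
  set i₀ : Fin m := ⟨t + s, by omega⟩ with hi₀
  -- Claim 1
  have claim1 : ∀ p : ℕ, p ≤ t → x + x' ∈
      Submodule.span (ZMod 2) (rowSet A p ∪ rowSet B (t - p) ∪ rowSet C s) := by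
    intro p hp
    have hpqr : p + (t - p) + (s + 1) = m := by omega
    have hb := famBasis_coe A B C hm hN hpqr
    have hb' := famBasis_coe A B C' hm hN' hpqr
    set b := famBasis A B C hm hN hpqr
    set b' := famBasis A B C' hm hN' hpqr
    have hSset : {i : Fin m | i.val < p ∨ (p ≤ i.val ∧ i.val < p + (t - p)) ∨
        (p + (t - p) ≤ i.val ∧ i.val < p + (t - p) + s)} = Set.univ \ {i₀} := by
      ext i
      have him := i.isLt
      simp only [Set.mem_setOf_eq, Set.mem_diff, Set.mem_univ, true_and,
        Set.mem_singleton_iff, Fin.ext_iff, hi₀]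
      omega
    have himg : rowSet A p ∪ rowSet B (t - p) ∪ rowSet C s = ⇑b '' (Set.univ \ {i₀}) := by
      rw [hb, rowSet_eq_image A B C p (t - p) p (t - p) s (by omega) le_rfl le_rfl (by omega),
        hSset]
    have himg' : rowSet A p ∪ rowSet B (t - p) ∪ rowSet C' s = ⇑b' '' (Set.univ \ {i₀}) := by
      rw [hb', rowSet_eq_image A B C' p (t - p) p (t - p) s (by omega) le_rfl le_rfl (by omega),
        hSset]
    have hfam_x : ∀ D : Matrix (Fin m) (Fin m) (ZMod 2),
        fam A B D p (t - p) i₀ = D ⟨s, by omega⟩ := by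
      intro D
      rw [fam, if_neg (show ¬(t + s < p) by omega), if_neg (show ¬(t + s < p + (t - p)) by omega)]
      exact congrArg D (Fin.ext (show t + s - p - (t - p) = s by omega))
    have hx_eq : x = b i₀ := by rw [hb, hfam_x]
    have hx'_eq : x' = b' i₀ := by rw [hb', hfam_x]
    have hspan_eq : Submodule.span (ZMod 2) (rowSet A p ∪ rowSet B (t - p) ∪ rowSet C s)
        = Submodule.span (ZMod 2) (rowSet A p ∪ rowSet B (t - p) ∪ rowSet C' s) := by
      rw [Submodule.span_union, Submodule.span_union
        (rowSet A p ∪ rowSet B (t - p)) (rowSet C' s), IH]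
    have hx'H : x' ∉ Submodule.span (ZMod 2) (rowSet A p ∪ rowSet B (t - p) ∪ rowSet C s) := by
      rw [hspan_eq, himg', hx'_eq]
      exact basis_not_mem b' (by simp)
    rw [himg, hx_eq]
    apply basis_char2 b
    rw [← himg]
    exact hx'H
  -- Claim 2
  have claim2 : ∀ k : ℕ, k ≤ t → x + x' ∈
      Submodule.span (ZMod 2) (rowSet A 0 ∪ rowSet B (t - k) ∪ rowSet C s) := by
    intro k
    induction k with
    | zero => intro _; simpa using claim1 0 (by omega)
    | succ k ih =>
      intro hk1
      have h1 := ih (by omega)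
      have h2 := claim1 (k + 1) (by omega)
      have hpqr2 : (k + 1) + (t - k) + s = m := by omega
      have hb2 := famBasis_coe A B C hm hN hpqr2
      set b2 := famBasis A B C hm hN hpqr2
      have himg1 : rowSet A 0 ∪ rowSet B (t - k) ∪ rowSet C s
          = ⇑b2 '' {i : Fin m | i.val < 0 ∨ ((k+1) ≤ i.val ∧ i.val < (k+1) + (t - k)) ∨
            ((k+1) + (t - k) ≤ i.val ∧ i.val < (k+1) + (t - k) + s)} := by
        rw [hb2]
        exact rowSet_eq_image A B C (k+1) (t-k) 0 (t-k) s (by omega) (by omega) le_rfl (by omega)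
      have himg2 : rowSet A (k+1) ∪ rowSet B (t - (k+1)) ∪ rowSet C s
          = ⇑b2 '' {i : Fin m | i.val < (k+1) ∨ ((k+1) ≤ i.val ∧ i.val < (k+1) + (t - k - 1)) ∨
            ((k+1) + (t - k) ≤ i.val ∧ i.val < (k+1) + (t - k) + s)} := by
        rw [hb2]
        have := rowSet_eq_image A B C (k+1) (t-k) (k+1) (t-k-1) s (by omega) le_rfl (by omega) (by omega)
        rw [show t - (k+1) = t - k - 1 by omega]
        exact this
      have himg3 : rowSet A 0 ∪ rowSet B (t - (k+1)) ∪ rowSet C s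
          = ⇑b2 '' {i : Fin m | i.val < 0 ∨ ((k+1) ≤ i.val ∧ i.val < (k+1) + (t - k - 1)) ∨
            ((k+1) + (t - k) ≤ i.val ∧ i.val < (k+1) + (t - k) + s)} := by
        rw [hb2]
        have := rowSet_eq_image A B C (k+1) (t-k) 0 (t-k-1) s (by omega) (by omega) (by omega) (by omega)
        rw [show t - (k+1) = t - k - 1 by omega]
        exact this
      rw [himg1] at h1
      rw [himg2] at h2
      rw [himg3]
      have hint := basis_span_inter b2 h1 h2
      have hseteq : ({i : Fin m | i.val < 0 ∨ ((k+1) ≤ i.val ∧ i.val < (k+1) + (t - k)) ∨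
            ((k+1) + (t - k) ≤ i.val ∧ i.val < (k+1) + (t - k) + s)} ∩
          {i : Fin m | i.val < (k+1) ∨ ((k+1) ≤ i.val ∧ i.val < (k+1) + (t - k - 1)) ∨
            ((k+1) + (t - k) ≤ i.val ∧ i.val < (k+1) + (t - k) + s)})
          = {i : Fin m | i.val < 0 ∨ ((k+1) ≤ i.val ∧ i.val < (k+1) + (t - k - 1)) ∨
            ((k+1) + (t - k) ≤ i.val ∧ i.val < (k+1) + (t - k) + s)} := by
        ext i
        simp only [Set.mem_inter_iff, Set.mem_setOf_eq]
        omega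
      rw [hseteq] at hint
      exact hint
  -- conclude
  have hfin : x + x' ∈ Submodule.span (ZMod 2) (rowSet C s) := by
    have := claim2 t le_rfl
    rw [rowSet_zero, Nat.sub_self, rowSet_zero] at this
    simpa using this
  have hxmem : x ∈ Submodule.span (ZMod 2) (rowSet C (s + 1)) :=
    Submodule.subset_span ⟨⟨s, by omega⟩, show s < s + 1 by omega, rfl⟩
  have hxx' : x + x' ∈ Submodule.span (ZMod 2) (rowSet C (s + 1)) :=
    Submodule.span_mono (rowSet_mono C (by omega)) hfin
  have hx'mem : x' ∈ Submodule.span (ZMod 2) (rowSet C (s + 1)) := by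
    have heq : x' = x + (x + x') := by
      funext i
      have hz : ∀ a b : ZMod 2, b = a + (a + b) := by decide
      exact hz _ _
    rw [heq]
    exact Submodule.add_mem _ hxmem hxx'
  rw [rowSet_succ C' (by omega)]
  rw [Submodule.span_union]
  apply sup_le
  · rw [← IH]
    exact Submodule.span_mono (rowSet_mono C (by omega))
  · rw [Submodule.span_singleton_le_iff_mem]
    exact hx'mem

theorem stmt17 (m : ℕ) (hm : 1 ≤ m) (A B C C' : Matrix (Fin m) (Fin m) (ZMod 2))
    (h : IsNet 0 m 3 (digitalNet m 3 ![A, B, C]))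
    (h' : IsNet 0 m 3 (digitalNet m 3 ![A, B, C'])) :
    ∀ j : ℕ, 1 ≤ j → j ≤ m →
      Submodule.span (ZMod 2) (rowSet C j) = Submodule.span (ZMod 2) (rowSet C' j) := by
  have hNc : NetInj A B C := by
    intro p q r hpqr v hv
    apply net_inj m ![A, B, C] h ![p, q, r] (show p + q + r = m from hpqr)
    intro i k hk
    fin_cases i
    · exact hv.1 k hk
    · exact hv.2.1 k hk
    · exact hv.2.2 k hk
  have hNc' : NetInj A B C' := by
    intro p q r hpqr v hv
    apply net_inj m ![A, B, C'] h' ![p, q, r] (show p + q + r = m from hpqr)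
    intro i k hk
    fin_cases i
    · exact hv.1 k hk
    · exact hv.2.1 k hk
    · exact hv.2.2 k hk
  have main : ∀ j : ℕ, j ≤ m →
      Submodule.span (ZMod 2) (rowSet C j) = Submodule.span (ZMod 2) (rowSet C' j) := by
    intro j
    induction j with
    | zero => intro _; rw [rowSet_zero, rowSet_zero]
    | succ j ih =>
      intro hj
      have IH := ih (by omega)
      exact le_antisymm (step A B C' C hNc' hNc j hj IH.symm) (step A B C C' hNc hNc' j hj IH)
  intro j _ hj
  exact main j hj
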